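/- Suppose f : ℝ^{n×p} → ℝ is globally Lipschitz continuous with constant M̂₁ with respect to the Frobenius norm, i.e. |f(A) − f(B)| ≤ M̂₁·‖A − B‖_F for all A, B. Then for every β > 0, the ExPen function h is bounded below on ℝ^{n×p}. -/

import Mathlib

open Matrix

attribute [local instance] Matrix.frobeniusNormedAddCommGroup Matrix.frobeniusNormedSpace

namespace ExPen

noncomputable def finner {n p : ℕ} (A B : Matrix (Fin n) (Fin p) ℝ) : ℝ := (Aᵀ * B).trace

noncomputable def Phi {p : ℕ} (M : Matrix (Fin p) (Fin p) ℝ) : Matrix (Fin p) (Fin p) ℝ :=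
  (1 / 2 : ℝ) • (M + Mᵀ)

noncomputable def Amap {n p : ℕ} (X : Matrix (Fin n) (Fin p) ℝ) : Matrix (Fin p) (Fin p) ℝ :=
  (3 / 2 : ℝ) • (1 : Matrix (Fin p) (Fin p) ℝ) - (1 / 2 : ℝ) • (Xᵀ * X)

noncomputable def g {n p : ℕ} (f : Matrix (Fin n) (Fin p) ℝ → ℝ)
    (X : Matrix (Fin n) (Fin p) ℝ) : ℝ := f (X * Amap X)

noncomputable def hpen {n p : ℕ} (f : Matrix (Fin n) (Fin p) ℝ → ℝ) (β : ℝ)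
    (X : Matrix (Fin n) (Fin p) ℝ) : ℝ := g f X + β / 4 * ‖Xᵀ * X - 1‖ ^ 2

noncomputable def dualCLM {n p : ℕ} (G : Matrix (Fin n) (Fin p) ℝ) :
    Matrix (Fin n) (Fin p) ℝ →L[ℝ] ℝ :=
  LinearMap.toContinuousLinearMap
    { toFun := fun D => (Gᵀ * D).trace
      map_add' := by intro D E; simp [Matrix.mul_add]
      map_smul' := by intro c D; simp [Matrix.mul_smul] }

def HasGradAt {n p : ℕ} (φ : Matrix (Fin n) (Fin p) ℝ → ℝ)
    (X G : Matrix (Fin n) (Fin p) ℝ) : Prop :=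
  HasFDerivAt φ (dualCLM G) X

noncomputable def specNorm {n p : ℕ} (X : Matrix (Fin n) (Fin p) ℝ) : ℝ :=
  ‖LinearMap.toContinuousLinearMap
    (Matrix.toEuclideanLin X : EuclideanSpace ℝ (Fin p) →ₗ[ℝ] EuclideanSpace ℝ (Fin n))‖

lemma posSemidef_tmul {n p : ℕ} (X : Matrix (Fin n) (Fin p) ℝ) : (Xᵀ * X).PosSemidef := by
  simpa [Matrix.conjTranspose_eq_transpose_of_trivial] using
    Matrix.posSemidef_conjTranspose_mul_self X

noncomputable def PosSemidef.sqrt {n : ℕ} {A : Matrix (Fin n) (Fin n) ℝ} (hA : A.PosSemidef) :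
    Matrix (Fin n) (Fin n) ℝ :=
  hA.1.eigenvectorUnitary.1 * diagonal ((↑) ∘ (√·) ∘ hA.1.eigenvalues) *
    (star hA.1.eigenvectorUnitary : Matrix (Fin n) (Fin n) ℝ)

noncomputable def Pst {n p : ℕ} (X : Matrix (Fin n) (Fin p) ℝ) : Matrix (Fin n) (Fin p) ℝ :=
  X * (PosSemidef.sqrt (posSemidef_tmul X))⁻¹


lemma norm_sq_sum {m k : ℕ} (A : Matrix (Fin m) (Fin k) ℝ) :
    ‖A‖ ^ 2 = ∑ i, ∑ j, (A i j) ^ 2 := by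
  rw [Matrix.frobenius_norm_def, ← Real.rpow_natCast _ 2, ← Real.rpow_mul (by positivity)]
  norm_num

lemma norm_sq_eq_trace {m k : ℕ} (X : Matrix (Fin m) (Fin k) ℝ) :
    ‖X‖ ^ 2 = (Xᵀ * X).trace := by
  rw [norm_sq_sum]
  simp only [Matrix.trace, Matrix.diag, Matrix.mul_apply, Matrix.transpose_apply]
  rw [Finset.sum_comm]
  simp_rw [pow_two]

lemma trace_le_sqrt {p : ℕ} (M : Matrix (Fin p) (Fin p) ℝ) :
    M.trace ≤ Real.sqrt p * ‖M‖ := by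
  have h1 : M.trace ^ 2 ≤ (p : ℝ) * ‖M‖ ^ 2 := by
    have ha : M.trace = ∑ i, M i i := rfl
    have hb := sq_sum_le_card_mul_sum_sq (s := (Finset.univ : Finset (Fin p)))
      (f := fun i => M i i)
    have hcc : ∑ i, (M i i) ^ 2 ≤ ‖M‖ ^ 2 := by
      rw [norm_sq_sum]
      exact Finset.sum_le_sum fun i _ =>
        Finset.single_le_sum (f := fun j => M i j ^ 2) (fun j _ => sq_nonneg _)
          (Finset.mem_univ i)
    simp only [Finset.card_univ, Fintype.card_fin] at hb
    rw [ha]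
    calc (∑ i, M i i) ^ 2 ≤ (p : ℝ) * ∑ i, (M i i) ^ 2 := by exact_mod_cast hb
      _ ≤ (p : ℝ) * ‖M‖ ^ 2 := by
          apply mul_le_mul_of_nonneg_left hcc (by positivity)
  calc M.trace ≤ |M.trace| := le_abs_self _
    _ = Real.sqrt (M.trace ^ 2) := (Real.sqrt_sq_eq_abs _).symm
    _ ≤ Real.sqrt ((p : ℝ) * ‖M‖ ^ 2) := Real.sqrt_le_sqrt h1
    _ = Real.sqrt p * ‖M‖ := by
        rw [Real.sqrt_mul (by positivity), Real.sqrt_sq (norm_nonneg _)]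

lemma norm_one_frob {p : ℕ} : ‖(1 : Matrix (Fin p) (Fin p) ℝ)‖ = Real.sqrt p := by
  have h := Matrix.frobenius_nnnorm_one (n := Fin p) (α := ℝ)
  rw [← coe_nnnorm, h]
  push_cast [Fintype.card_fin]
  simp

lemma scalar_bdd (a b β : ℝ) (hβ : 0 < β) : ∃ c : ℝ, ∀ t : ℝ, c ≤ β * t ^ 2 - a * t - b := by
  refine ⟨-b - a ^ 2 / (4 * β), fun t => ?_⟩
  have h : a ^ 2 / (4 * β) * (4 * β) = a ^ 2 := div_mul_cancel₀ _ (by positivity)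
  nlinarith [sq_nonneg (2 * β * t - a), hβ]


set_option maxHeartbeats 1000000 in
theorem statement_5 {n p : ℕ} (f : Matrix (Fin n) (Fin p) ℝ → ℝ) (β M₁ : ℝ)
    (hLip : ∀ A B : Matrix (Fin n) (Fin p) ℝ, |f A - f B| ≤ M₁ * ‖A - B‖)
    (hβ : 0 < β) :
    ∃ c : ℝ, ∀ X : Matrix (Fin n) (Fin p) ℝ, c ≤ hpen f β X := by
  set sp := Real.sqrt p with hspdef
  have hsp : 0 ≤ sp := Real.sqrt_nonneg _
  have hsp2 : sp ^ 2 = (p : ℝ) := Real.sq_sqrt (by positivity)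
  set M := max M₁ 0 with hMdef
  have hM0 : 0 ≤ M := le_max_right _ _
  obtain ⟨c, hc⟩ := scalar_bdd (β * sp / 4 + 2 * M ^ 2 * sp / β)
    (β * p / 2 + 2 * M ^ 2 * p / β - f 0) (β / 8) (by positivity)
  refine ⟨c, fun X => ?_⟩
  simp only [hpen, g]
  set t := ‖Xᵀ * X - 1‖ with htdef
  have ht0 : 0 ≤ t := norm_nonneg _
  have hs0 : 0 ≤ ‖X‖ := norm_nonneg _
  -- (1) ‖X‖² ≤ p + √p t
  have h1 : ‖X‖ ^ 2 ≤ (p : ℝ) + sp * t := by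
    have e1 : ‖X‖ ^ 2 = (Xᵀ * X).trace := norm_sq_eq_trace X
    have e2 : (Xᵀ * X).trace = (p : ℝ) + (Xᵀ * X - 1).trace := by
      rw [Matrix.trace_sub, Matrix.trace_one]
      simp
    have e3 := trace_le_sqrt (Xᵀ * X - 1)
    rw [e1, e2]
    rw [← htdef, ← hspdef] at e3
    linarith
  -- (2) ‖X * Amap X‖ ≤ ‖X‖ (2√p + t/2)
  have h2 : ‖X * Amap X‖ ≤ ‖X‖ * (2 * sp + t / 2) := by
    have hXtX : ‖Xᵀ * X‖ ≤ sp + t := by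
      calc ‖Xᵀ * X‖ = ‖(Xᵀ * X - 1) + 1‖ := by rw [sub_add_cancel]
        _ ≤ ‖Xᵀ * X - 1‖ + ‖(1 : Matrix (Fin p) (Fin p) ℝ)‖ := norm_add_le _ _
        _ = t + sp := by rw [norm_one_frob, ← htdef, ← hspdef]
        _ = sp + t := by ring
    have hA : ‖Amap X‖ ≤ 2 * sp + t / 2 := by
      calc ‖Amap X‖ ≤ ‖(3 / 2 : ℝ) • (1 : Matrix (Fin p) (Fin p) ℝ)‖ +
            ‖(1 / 2 : ℝ) • (Xᵀ * X)‖ := norm_sub_le _ _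
        _ = 3 / 2 * ‖(1 : Matrix (Fin p) (Fin p) ℝ)‖ + 1 / 2 * ‖Xᵀ * X‖ := by
            rw [norm_smul, norm_smul]
            norm_num
        _ ≤ 3 / 2 * sp + 1 / 2 * (sp + t) := by
            rw [norm_one_frob, ← hspdef]
            nlinarith [hXtX]
        _ = 2 * sp + t / 2 := by ring
    calc ‖X * Amap X‖ ≤ ‖X‖ * ‖Amap X‖ := Matrix.frobenius_norm_mul _ _
      _ ≤ ‖X‖ * (2 * sp + t / 2) := mul_le_mul_of_nonneg_left hA hs0
  -- (3) Lipschitz lower bound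
  have h3 : f 0 - M * ‖X * Amap X‖ ≤ f (X * Amap X) := by
    have hl := hLip 0 (X * Amap X)
    rw [zero_sub, norm_neg] at hl
    have h4 := le_of_abs_le hl
    have h5 : M₁ * ‖X * Amap X‖ ≤ M * ‖X * Amap X‖ :=
      mul_le_mul_of_nonneg_right (le_max_left _ _) (norm_nonneg _)
    linarith
  -- key polynomial inequality
  have key : β * (M * (‖X‖ * (2 * sp + t / 2))) ≤
      β ^ 2 / 32 * t ^ 2 + (β ^ 2 * sp / 4 + 2 * M ^ 2 * sp) * t + (β ^ 2 * p / 2 + 2 * M ^ 2 * p) := by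
    nlinarith [sq_nonneg (2 * M * ‖X‖ - β * (2 * sp + t / 2) / 2), h1, sq_nonneg M, hsp2,
      hM0, hs0, ht0, hsp, hβ]
  have hkey2 : M * ‖X * Amap X‖ ≤ β / 32 * t ^ 2 + (β * sp / 4 + 2 * M ^ 2 * sp / β) * t
      + (β * p / 2 + 2 * M ^ 2 * p / β) := by
    have hb1 : β * (β * sp / 4 + 2 * M ^ 2 * sp / β) = β ^ 2 * sp / 4 + 2 * M ^ 2 * sp := by
      field_simp
    have hb2 : β * (β * p / 2 + 2 * M ^ 2 * p / β) = β ^ 2 * p / 2 + 2 * M ^ 2 * p := by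
      field_simp
    have hXAle : M * ‖X * Amap X‖ ≤ M * (‖X‖ * (2 * sp + t / 2)) :=
      mul_le_mul_of_nonneg_left h2 hM0
    nlinarith [key, hb1, hb2, hβ, hXAle]
  have hct := hc t
  nlinarith [hct, h3, hkey2, mul_nonneg hβ.le (sq_nonneg t)]


end ExPen
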